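/- arXiv:2211.03301 — 4 statements merged into one kernel-verified Lean document; each statement's English description precedes it below -/
import Mathlib

section
/- For α, β > 0 and vectors a_1, ..., a_N (N ≥ 2) in an inner product space: ∑_{i=1}^N ‖a_i‖² ≥ (1/(αN + (N−2)β)) · [ (2β/(N(N−1)))·(∑_{1≤i<j≤N} ‖a_i + a_j‖)² + α·∑_{1≤i<j≤N} ‖a_i − a_j‖² + (α−β)·‖∑_{i=1}^N a_i‖² ]. -/
open Finset

private lemma pair_sum_aux {N : ℕ} (f : Fin N → Fin N → ℝ) (hsymm : ∀ i j, f i j = f j i) :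
    2 * ∑ i, ∑ j ∈ univ.filter (fun j => i < j), f i j =
      (∑ i, ∑ j, f i j) - ∑ i, f i i := by
  have key : ∀ i j : Fin N, f i j =
      (if i < j then f i j else 0) + (if j < i then f i j else 0) +
        (if i = j then f i j else 0) := by
    intro i j
    rcases lt_trichotomy i j with h | h | h
    · simp [h, asymm h, h.ne]
    · subst h; simp
    · simp [h, asymm h, h.ne']
  have htot : (∑ i, ∑ j, f i j) =
      (∑ i, ∑ j ∈ univ.filter (fun j => i < j), f i j) +
      (∑ i, ∑ j ∈ univ.filter (fun j => i < j), f i j) +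
      ∑ i, f i i := by
    calc (∑ i, ∑ j, f i j)
        = ∑ i, ∑ j, ((if i < j then f i j else 0) + (if j < i then f i j else 0) +
            (if i = j then f i j else 0)) := by
          refine Finset.sum_congr rfl fun i _ => Finset.sum_congr rfl fun j _ => key i j
      _ = (∑ i, ∑ j, if i < j then f i j else 0) +
          (∑ i, ∑ j, if j < i then f i j else 0) +
          (∑ i, ∑ j, if i = j then f i j else 0) := by
          simp [Finset.sum_add_distrib]
      _ = (∑ i, ∑ j ∈ univ.filter (fun j => i < j), f i j) +
          (∑ i, ∑ j ∈ univ.filter (fun j => i < j), f i j) +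
          ∑ i, f i i := by
          congr 1
          · congr 1
            · exact Finset.sum_congr rfl fun i _ => (Finset.sum_filter _ _).symm
            · rw [Finset.sum_comm]
              refine Finset.sum_congr rfl fun i _ => ?_
              rw [← Finset.sum_filter]
              exact Finset.sum_congr rfl fun j _ => hsymm j i
          · refine Finset.sum_congr rfl fun i _ => ?_
            simp
  linarith

theorem weighted_norm_ineq_X {𝕜 V : Type*} [RCLike 𝕜] [NormedAddCommGroup V]
    [InnerProductSpace 𝕜 V] (N : ℕ) (hN : 2 ≤ N) (a : Fin N → V)
    (α β : ℝ) (hα : 0 < α) (hβ : 0 < β) :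
    ∑ i, ‖a i‖ ^ 2 ≥
      (1 / (α * N + ((N : ℝ) - 2) * β)) *
        ((2 * β / ((N : ℝ) * ((N : ℝ) - 1))) *
          (∑ i : Fin N, ∑ j ∈ univ.filter (fun j => i < j), ‖a i + a j‖) ^ 2 +
         α * (∑ i : Fin N, ∑ j ∈ univ.filter (fun j => i < j), ‖a i - a j‖ ^ 2) +
         (α - β) * ‖∑ i, a i‖ ^ 2) := by
  have hN2 : (2:ℝ) ≤ (N:ℝ) := by exact_mod_cast hN
  set S := ∑ i, ‖a i‖ ^ 2 with hS
  set T := ‖∑ i, a i‖ ^ 2 with hT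
  set r : Fin N → Fin N → ℝ := fun i j => RCLike.re (inner 𝕜 (a i) (a j)) with hr
  have hsymm : ∀ i j, r i j = r j i := fun i j => inner_re_symm (𝕜 := 𝕜) (a i) (a j)
  have hdiag : ∀ i, r i i = ‖a i‖ ^ 2 := fun i => by
    simp [hr, ← norm_sq_eq_re_inner (𝕜 := 𝕜)]
  have hTsum : T = ∑ i, ∑ j, r i j := by
    rw [hT, norm_sq_eq_re_inner (𝕜 := 𝕜), sum_inner]
    rw [map_sum]
    refine Finset.sum_congr rfl fun i _ => ?_
    rw [inner_sum, map_sum]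
  have hplus : ∀ i j, ‖a i + a j‖ ^ 2 = ‖a i‖ ^ 2 + ‖a j‖ ^ 2 + 2 * r i j := by
    intro i j
    have := norm_add_sq (𝕜 := 𝕜) (a i) (a j)
    rw [this]; ring
  have hminus : ∀ i j, ‖a i - a j‖ ^ 2 = ‖a i‖ ^ 2 + ‖a j‖ ^ 2 - 2 * r i j := by
    intro i j
    have := norm_sub_sq (𝕜 := 𝕜) (a i) (a j)
    rw [this]; ring
  -- total double sums
  have hdoub : ∀ c : ℝ, (∑ i : Fin N, ∑ j : Fin N, (‖a i‖ ^ 2 + ‖a j‖ ^ 2 + c * r i j)) =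
      2 * N * S + c * T := by
    intro c
    have hrow : ∀ i : Fin N, (∑ j : Fin N, (‖a i‖ ^ 2 + ‖a j‖ ^ 2 + c * r i j)) =
        (N : ℝ) * ‖a i‖ ^ 2 + S + c * ∑ j, r i j := by
      intro i
      rw [Finset.sum_add_distrib, Finset.sum_add_distrib, Finset.sum_const,
        Finset.card_univ, Fintype.card_fin, nsmul_eq_mul, Finset.mul_sum, ← hS]
    rw [Finset.sum_congr rfl (fun i _ => hrow i), Finset.sum_add_distrib,
      Finset.sum_add_distrib, ← Finset.mul_sum, ← Finset.mul_sum, ← hTsum, ← hS,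
      Finset.sum_const, Finset.card_univ, Fintype.card_fin, nsmul_eq_mul]
    ring
  -- identity for minus sum
  have h1 : (∑ i : Fin N, ∑ j ∈ univ.filter (fun j => i < j), ‖a i - a j‖ ^ 2) =
      (N : ℝ) * S - T := by
    have h := pair_sum_aux (fun i j => ‖a i - a j‖ ^ 2)
      (fun i j => by show ‖a i - a j‖ ^ 2 = ‖a j - a i‖ ^ 2; rw [norm_sub_rev])
    have htot : (∑ i : Fin N, ∑ j : Fin N, ‖a i - a j‖ ^ 2) = 2 * N * S - 2 * T := by
      have e : (∑ i : Fin N, ∑ j : Fin N, ‖a i - a j‖ ^ 2) =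
          ∑ i : Fin N, ∑ j : Fin N, (‖a i‖ ^ 2 + ‖a j‖ ^ 2 + (-2) * r i j) := by
        refine Finset.sum_congr rfl fun i _ => Finset.sum_congr rfl fun j _ => ?_
        rw [hminus]; ring
      rw [e, hdoub]; ring
    have hdg : (∑ i : Fin N, ‖a i - a i‖ ^ 2) = 0 := by simp
    rw [htot, hdg] at h
    linarith
  -- identity for plus sum
  have h2 : (∑ i : Fin N, ∑ j ∈ univ.filter (fun j => i < j), ‖a i + a j‖ ^ 2) =
      ((N : ℝ) - 2) * S + T := by
    have h := pair_sum_aux (fun i j => ‖a i + a j‖ ^ 2)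
      (fun i j => by show ‖a i + a j‖ ^ 2 = ‖a j + a i‖ ^ 2; rw [add_comm])
    have htot : (∑ i : Fin N, ∑ j : Fin N, ‖a i + a j‖ ^ 2) = 2 * N * S + 2 * T := by
      have e : (∑ i : Fin N, ∑ j : Fin N, ‖a i + a j‖ ^ 2) =
          ∑ i : Fin N, ∑ j : Fin N, (‖a i‖ ^ 2 + ‖a j‖ ^ 2 + 2 * r i j) := by
        refine Finset.sum_congr rfl fun i _ => Finset.sum_congr rfl fun j _ => ?_
        rw [hplus]
      rw [e, hdoub]
    have hdg : (∑ i : Fin N, ‖a i + a i‖ ^ 2) = 4 * S := by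
      rw [hS, Finset.mul_sum]
      refine Finset.sum_congr rfl fun i _ => ?_
      rw [hplus, hdiag]; ring
    rw [htot, hdg] at h
    linarith
  -- counting
  have hcount : 2 * (∑ i : Fin N, ∑ j ∈ univ.filter (fun j => i < j), (1:ℝ)) =
      (N:ℝ) * N - N := by
    have h := pair_sum_aux (N := N) (fun _ _ => (1:ℝ)) (fun _ _ => rfl)
    simpa using h
  -- Cauchy-Schwarz
  set P := ∑ i : Fin N, ∑ j ∈ univ.filter (fun j => i < j), ‖a i + a j‖ with hP
  have hCS : P ^ 2 ≤ (((N:ℝ) * N - N) / 2) *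
      (∑ i : Fin N, ∑ j ∈ univ.filter (fun j => i < j), ‖a i + a j‖ ^ 2) := by
    set s := univ.sigma (fun i : Fin N => univ.filter (fun j => i < j)) with hs
    have e1 : P = ∑ p ∈ s, ‖a p.1 + a p.2‖ := by rw [hP]; exact Finset.sum_sigma' _ _ _
    have e2 : (∑ i : Fin N, ∑ j ∈ univ.filter (fun j => i < j), ‖a i + a j‖ ^ 2) =
        ∑ p ∈ s, ‖a p.1 + a p.2‖ ^ 2 := Finset.sum_sigma' _ _ _
    have ecard : (s.card : ℝ) = ((N:ℝ) * N - N) / 2 := by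
      have : (s.card : ℝ) = ∑ i : Fin N, ∑ j ∈ univ.filter (fun j => i < j), (1:ℝ) := by
        rw [Finset.card_sigma]
        push_cast
        refine Finset.sum_congr rfl fun i _ => ?_
        simp
      rw [this]; linarith
    have := sq_sum_le_card_mul_sum_sq (s := s) (f := fun p => ‖a p.1 + a p.2‖)
    rw [e1, e2, ← ecard]
    exact this
  -- final algebra
  have hNN : (0:ℝ) < (N:ℝ) * ((N:ℝ) - 1) := by nlinarith
  have hD : (0:ℝ) < α * N + ((N : ℝ) - 2) * β := by nlinarith
  rw [ge_iff_le, one_div, inv_mul_le_iff₀ hD]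
  have hQnn : (0:ℝ) ≤ ((N : ℝ) - 2) * S + T := by
    have hSnn : (0:ℝ) ≤ S := Finset.sum_nonneg fun i _ => sq_nonneg _
    have hTnn : (0:ℝ) ≤ T := sq_nonneg _
    nlinarith
  have hkey : (2 * β / ((N : ℝ) * ((N : ℝ) - 1))) * P ^ 2 ≤ β * (((N : ℝ) - 2) * S + T) := by
    have hc : (0:ℝ) ≤ 2 * β / ((N : ℝ) * ((N : ℝ) - 1)) := by positivity
    have := mul_le_mul_of_nonneg_left hCS hc
    rw [h2] at this
    refine this.trans (le_of_eq ?_)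
    have hne : (N:ℝ) * ((N:ℝ) - 1) ≠ 0 := ne_of_gt hNN
    have hne1 : (N:ℝ) - 1 ≠ 0 := by linarith
    field_simp
  rw [h1]
  nlinarith [hkey]
end

section
/- For α, β > 0 and vectors a_1, ..., a_N (N ≥ 2) in an inner product space: ∑_{i=1}^N ‖a_i‖² ≥ (1/(αN + (N−2)β)) · [ β·∑_{1≤i<j≤N} ‖a_i + a_j‖² + (2α/(N(N−1)))·(∑_{1≤i<j≤N} ‖a_i − a_j‖)² + (α−β)·‖∑_{i=1}^N a_i‖² ]. -/
open Finset

private lemma tri_split {N : ℕ} (F : Fin N → Fin N → ℝ) :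
    ∑ i, ∑ j, F i j = (∑ i, F i i)
      + ∑ i : Fin N, ∑ j ∈ univ.filter (fun j => i < j), (F i j + F j i) := by
  have h1 : ∀ i : Fin N, ∑ j, F i j =
      (∑ j ∈ univ.filter (fun j => i < j), F i j)
      + (∑ j ∈ univ.filter (fun j => j < i), F i j) + F i i := by
    intro i
    have : ∀ j : Fin N, F i j = (if i < j then F i j else 0)
        + (if j < i then F i j else 0) + (if j = i then F i j else 0) := by
      intro j
      rcases lt_trichotomy i j with h | h | h
      · simp [h, asymm h, h.ne']
      · subst h; simp
      · simp [h, asymm h, h.ne]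
    calc ∑ j, F i j = ∑ j, ((if i < j then F i j else 0)
          + (if j < i then F i j else 0) + (if j = i then F i j else 0)) := by
          exact Finset.sum_congr rfl fun j _ => this j
      _ = _ := by
          rw [Finset.sum_add_distrib, Finset.sum_add_distrib, ← Finset.sum_filter,
            ← Finset.sum_filter, Finset.sum_ite_eq' univ i (fun j => F i j)]
          simp
  have h2 : ∑ i : Fin N, ∑ j ∈ univ.filter (fun j => j < i), F i j
      = ∑ j : Fin N, ∑ i ∈ univ.filter (fun i => j < i), F i j := by
    exact Finset.sum_comm' (by intro x y; simp)
  calc ∑ i, ∑ j, F i j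
      = ∑ i, ((∑ j ∈ univ.filter (fun j => i < j), F i j)
        + (∑ j ∈ univ.filter (fun j => j < i), F i j) + F i i) :=
        Finset.sum_congr rfl fun i _ => h1 i
    _ = (∑ i : Fin N, ∑ j ∈ univ.filter (fun j => i < j), F i j)
        + (∑ i : Fin N, ∑ j ∈ univ.filter (fun j => j < i), F i j)
        + ∑ i, F i i := by rw [Finset.sum_add_distrib, Finset.sum_add_distrib]
    _ = _ := by
        rw [h2]
        have h3 : ∀ i : Fin N, ∑ j ∈ univ.filter (fun j => i < j), (F i j + F j i)
            = (∑ j ∈ univ.filter (fun j => i < j), F i j)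
              + ∑ j ∈ univ.filter (fun j => i < j), F j i := fun i =>
          Finset.sum_add_distrib
        simp_rw [h3]
        rw [Finset.sum_add_distrib]
        ring

theorem weighted_norm_ineq_Y {𝕜 V : Type*} [RCLike 𝕜] [NormedAddCommGroup V]
    [InnerProductSpace 𝕜 V] (N : ℕ) (hN : 2 ≤ N) (a : Fin N → V)
    (α β : ℝ) (hα : 0 < α) (hβ : 0 < β) :
    ∑ i, ‖a i‖ ^ 2 ≥
      (1 / (α * N + ((N : ℝ) - 2) * β)) *
        (β * (∑ i : Fin N, ∑ j ∈ univ.filter (fun j => i < j), ‖a i + a j‖ ^ 2) +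
         (2 * α / ((N : ℝ) * ((N : ℝ) - 1))) *
          (∑ i : Fin N, ∑ j ∈ univ.filter (fun j => i < j), ‖a i - a j‖) ^ 2 +
         (α - β) * ‖∑ i, a i‖ ^ 2) := by
  letI : InnerProductSpace ℝ V := InnerProductSpace.rclikeToReal 𝕜 V
  set n : ℝ := (N : ℝ) with hn
  have hn2 : (2:ℝ) ≤ n := by rw [hn]; exact_mod_cast hN
  set S := ∑ i, ‖a i‖ ^ 2 with hS
  set C := ∑ i : Fin N, ∑ j ∈ univ.filter (fun j => i < j), (inner ℝ (a i) (a j) : ℝ) with hC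
  set A := ∑ i : Fin N, ∑ j ∈ univ.filter (fun j => i < j), ‖a i + a j‖ ^ 2 with hA
  set B := ∑ i : Fin N, ∑ j ∈ univ.filter (fun j => i < j), ‖a i - a j‖ ^ 2 with hB
  set D := ∑ i : Fin N, ∑ j ∈ univ.filter (fun j => i < j), ‖a i - a j‖ with hD
  set M := ∑ i : Fin N, ∑ j ∈ univ.filter (fun j => i < j), (1:ℝ) with hM
  -- basic pair-sum identity: ∑_{i<j} (f i + f j) = (n-1) ∑ f
  have pair_sum : ∀ f : Fin N → ℝ,
      ∑ i : Fin N, ∑ j ∈ univ.filter (fun j => i < j), (f i + f j)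
        = (n - 1) * ∑ i, f i := by
    intro f
    have h := tri_split (fun i j => f i + f j)
    have hL : ∑ i : Fin N, ∑ j : Fin N, (f i + f j) = 2 * n * ∑ i, f i := by
      have e1 : ∀ i : Fin N, ∑ j : Fin N, (f i + f j) = n * f i + ∑ j, f j := by
        intro i
        rw [Finset.sum_add_distrib, Finset.sum_const, Finset.card_univ,
          Fintype.card_fin, nsmul_eq_mul, hn]
      simp_rw [e1]
      rw [Finset.sum_add_distrib, Finset.sum_const, Finset.card_univ,
        Fintype.card_fin, nsmul_eq_mul, ← Finset.mul_sum, hn]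
      ring
    have hdiag : ∑ i : Fin N, (f i + f i) = 2 * ∑ i, f i := by
      rw [Finset.sum_add_distrib]; ring
    have hsym : ∑ i : Fin N, ∑ j ∈ univ.filter (fun j => i < j),
        ((f i + f j) + (f j + f i))
        = 2 * ∑ i : Fin N, ∑ j ∈ univ.filter (fun j => i < j), (f i + f j) := by
      simp_rw [Finset.mul_sum]
      congr 1; ext i; congr 1; ext j; ring
    rw [hL, hdiag, hsym] at h
    linarith
  -- M identity
  have hM2 : 2 * M = n * (n - 1) := by
    have := pair_sum (fun _ => (1:ℝ))
    have h1 : ∑ i : Fin N, ∑ j ∈ univ.filter (fun j => i < j), ((1:ℝ) + 1)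
        = 2 * M := by rw [hM]; simp_rw [Finset.mul_sum]; norm_num
    rw [h1] at this
    rw [this]
    simp [hn]
    ring
  have hMpos : 0 < M := by nlinarith
  -- A identity
  have hAid : A = (n - 1) * S + 2 * C := by
    rw [hA]
    have : ∀ i j : Fin N, ‖a i + a j‖ ^ 2
        = (‖a i‖ ^ 2 + ‖a j‖ ^ 2) + 2 * (inner ℝ (a i) (a j) : ℝ) := by
      intro i j; rw [norm_add_sq_real]; ring
    simp_rw [this]
    rw [Finset.sum_congr rfl fun i _ => Finset.sum_add_distrib,
      Finset.sum_add_distrib, pair_sum]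
    rw [hC, hS]
    simp_rw [Finset.mul_sum]
  -- B identity
  have hBid : B = (n - 1) * S - 2 * C := by
    rw [hB]
    have : ∀ i j : Fin N, ‖a i - a j‖ ^ 2
        = (‖a i‖ ^ 2 + ‖a j‖ ^ 2) - 2 * (inner ℝ (a i) (a j) : ℝ) := by
      intro i j; rw [norm_sub_sq_real]; ring
    simp_rw [this]
    rw [Finset.sum_congr rfl fun i _ => Finset.sum_sub_distrib _ _,
      Finset.sum_sub_distrib, pair_sum]
    rw [hC, hS]
    simp_rw [Finset.mul_sum]
  -- T identity
  have hTid : ‖∑ i, a i‖ ^ 2 = S + 2 * C := by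
    rw [← real_inner_self_eq_norm_sq, sum_inner]
    simp_rw [inner_sum]
    rw [tri_split (fun i j => (inner ℝ (a i) (a j) : ℝ))]
    simp_rw [real_inner_self_eq_norm_sq]
    have : ∑ i : Fin N, ∑ j ∈ univ.filter (fun j => i < j),
        ((inner ℝ (a i) (a j) : ℝ) + (inner ℝ (a j) (a i) : ℝ)) = 2 * C := by
      rw [hC]
      simp_rw [Finset.mul_sum]
      congr 1; ext i; congr 1; ext j
      rw [real_inner_comm (a j) (a i)]; ring
    rw [this, hS]
  -- Cauchy-Schwarz
  have hCS : D ^ 2 ≤ M * B := by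
    rw [hD, hB, hM]
    rw [Finset.sum_sigma' univ _ (fun i j => ‖a i - a j‖),
      Finset.sum_sigma' univ _ (fun i j => ‖a i - a j‖ ^ 2),
      Finset.sum_sigma' univ _ (fun _ _ => (1:ℝ))]
    have hcard : ∑ x ∈ (univ : Finset (Fin N)).sigma
        (fun i => univ.filter (fun j => i < j)), (1:ℝ)
        = (#((univ : Finset (Fin N)).sigma (fun i => univ.filter (fun j => i < j))) : ℝ) := by
      simp
    rw [hcard]
    exact sq_sum_le_card_mul_sum_sq
  -- positivity of denominators
  have hd : 0 < α * n + (n - 2) * β := by nlinarith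
  have hnn : 0 < n * (n - 1) := by nlinarith
  -- key combination
  have hkey : β * A + α * B + (α - β) * (S + 2 * C) = (α * n + (n - 2) * β) * S := by
    rw [hAid, hBid]; ring
  have hDB : (2 * α / (n * (n - 1))) * D ^ 2 ≤ α * B := by
    have hM0 : M ≠ 0 := ne_of_gt hMpos
    have h0 : (0:ℝ) ≤ 2 * α / (n * (n - 1)) :=
      le_of_lt (div_pos (by linarith) hnn)
    have h1 : (2 * α / (n * (n - 1))) * D ^ 2 ≤ (2 * α / (n * (n - 1))) * (M * B) :=
      mul_le_mul_of_nonneg_left hCS h0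
    have h2 : (2 * α / (n * (n - 1))) * (M * B) = α * B := by
      rw [← hM2, mul_div_mul_left α M (two_ne_zero), ← mul_assoc,
        div_mul_cancel₀ α hM0]
    linarith
  rw [ge_iff_le, hTid]
  rw [one_div, inv_mul_le_iff₀ hd]
  calc β * A + 2 * α / (n * (n - 1)) * D ^ 2 + (α - β) * (S + 2 * C)
      ≤ β * A + α * B + (α - β) * (S + 2 * C) := by linarith
    _ = (α * n + (n - 2) * β) * S := hkey
end

section
/- For N ≥ 2 Hermitian observables A_1, ..., A_N and a density matrix ρ, and any α ≥ 0, x, y ∈ {0,1}: ∑_{i=1}^N Δ²_ρ(A_i) ≥ (1/((1+α²)(N−1))) · [ (2/(N(N−1)))·(∑_{1≤i<j≤N} Δ_ρ(α^{1−x} A_i + (−1)^y α^x A_j))² + ∑_{1≤i<j≤N} Δ²_ρ(α^x A_i + (−1)^{1−y} α^{1−x} A_j) ] (Theorem 1 of the paper). -/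
open Finset ComplexOrder

/-- Variance of an observable `M` in the state `ρ`. -/
noncomputable def qvar {d : ℕ} (ρ M : Matrix (Fin d) (Fin d) ℂ) : ℝ :=
  ((ρ * M ^ 2).trace - (ρ * M).trace ^ 2).re

/-- Standard deviation of an observable `M` in the state `ρ`. -/
noncomputable def qdev {d : ℕ} (ρ M : Matrix (Fin d) (Fin d) ℂ) : ℝ :=
  Real.sqrt (qvar ρ M)

section Aux

lemma trace_re_nonneg_of_posSemidef {d : ℕ} {M : Matrix (Fin d) (Fin d) ℂ}
    (h : M.PosSemidef) : 0 ≤ M.trace.re := by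
  rw [Matrix.trace, Complex.re_sum]
  refine Finset.sum_nonneg fun i _ => ?_
  have h2 := h.re_dotProduct_nonneg (Pi.single i 1)
  simpa [Matrix.mulVec, dotProduct, Pi.single_apply] using h2

lemma herm_comb {d : ℕ} {Ai Aj : Matrix (Fin d) (Fin d) ℂ}
    (hAi : Ai.IsHermitian) (hAj : Aj.IsHermitian) (a b : ℝ) :
    (((a : ℂ)) • Ai + ((b : ℂ)) • Aj).IsHermitian := by
  unfold Matrix.IsHermitian
  rw [Matrix.conjTranspose_add, Matrix.conjTranspose_smul, Matrix.conjTranspose_smul,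
    hAi.eq, hAj.eq]
  simp [Complex.star_def, Complex.conj_ofReal]

lemma qvar_nonneg {d : ℕ} {ρ M : Matrix (Fin d) (Fin d) ℂ} (hρ : ρ.PosSemidef)
    (hρ1 : ρ.trace = 1) (hM : M.IsHermitian) : 0 ≤ qvar ρ M := by
  set t := (ρ * M).trace with ht
  have htstar : star t = t := by
    rw [ht, ← Matrix.trace_conjTranspose, Matrix.conjTranspose_mul, hρ.isHermitian.eq, hM.eq,
      Matrix.trace_mul_comm]
  set K := M - t • (1 : Matrix (Fin d) (Fin d) ℂ) with hK
  have hKH : K.conjTranspose = K := by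
    rw [hK, Matrix.conjTranspose_sub, Matrix.conjTranspose_smul, hM.eq, htstar,
      Matrix.conjTranspose_one]
  have h2 : ρ * (K * K) = ρ * M ^ 2 - (2 * t) • (ρ * M) + (t * t) • ρ := by
    rw [hK, sq]
    simp only [Matrix.mul_sub, Matrix.sub_mul, Matrix.mul_smul, Matrix.smul_mul,
      Matrix.mul_one, Matrix.one_mul, smul_smul, two_mul, add_smul, smul_sub]
    abel
  have key : qvar ρ M = ((K * ρ * K).trace).re := by
    rw [Matrix.mul_assoc, Matrix.trace_mul_comm, Matrix.mul_assoc, h2]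
    simp only [qvar, Matrix.trace_add, Matrix.trace_sub, Matrix.trace_smul, hρ1,
      smul_eq_mul, mul_one, ← ht]
    congr 1
    ring
  rw [key]
  exact trace_re_nonneg_of_posSemidef (by simpa [hKH] using hρ.conjTranspose_mul_mul_same K)

lemma trace_expand {d : ℕ} (ρ A B : Matrix (Fin d) (Fin d) ℂ) (a b : ℂ) :
    (ρ * (a • A + b • B) ^ 2).trace =
      a ^ 2 * (ρ * A ^ 2).trace + a * b * (ρ * (A * B)).trace
        + a * b * (ρ * (B * A)).trace + b ^ 2 * (ρ * B ^ 2).trace := by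
  simp only [sq, Matrix.mul_add, Matrix.add_mul, Matrix.smul_mul, Matrix.mul_smul,
    smul_smul, Matrix.trace_add, Matrix.trace_smul, smul_eq_mul]
  ring

lemma trace_lin {d : ℕ} (ρ A B : Matrix (Fin d) (Fin d) ℂ) (a b : ℂ) :
    (ρ * (a • A + b • B)).trace = a * (ρ * A).trace + b * (ρ * B).trace := by
  simp only [Matrix.mul_add, Matrix.mul_smul, Matrix.trace_add, Matrix.trace_smul, smul_eq_mul]

lemma pair_id {d : ℕ} (ρ Ai Aj : Matrix (Fin d) (Fin d) ℂ) (p q r s c : ℂ)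
    (h1 : p ^ 2 + r ^ 2 = c) (h2 : q ^ 2 + s ^ 2 = c) (h3 : p * q + r * s = 0) :
    ((ρ * (p • Ai + q • Aj) ^ 2).trace - (ρ * (p • Ai + q • Aj)).trace ^ 2)
      + ((ρ * (r • Ai + s • Aj) ^ 2).trace - (ρ * (r • Ai + s • Aj)).trace ^ 2)
    = c * (((ρ * Ai ^ 2).trace - (ρ * Ai).trace ^ 2)
      + ((ρ * Aj ^ 2).trace - (ρ * Aj).trace ^ 2)) := by
  rw [trace_expand, trace_expand, trace_lin, trace_lin]
  linear_combination ((ρ * Ai ^ 2).trace - (ρ * Ai).trace ^ 2) * h1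
    + ((ρ * Aj ^ 2).trace - (ρ * Aj).trace ^ 2) * h2
    + ((ρ * (Ai * Aj)).trace + (ρ * (Aj * Ai)).trace
        - 2 * (ρ * Ai).trace * (ρ * Aj).trace) * h3

lemma qvar_pair_id {d : ℕ} (ρ Ai Aj : Matrix (Fin d) (Fin d) ℂ) (p q r s : ℝ) (c : ℝ)
    (h1 : p ^ 2 + r ^ 2 = c) (h2 : q ^ 2 + s ^ 2 = c) (h3 : p * q + r * s = 0) :
    qvar ρ ((p : ℂ) • Ai + (q : ℂ) • Aj) + qvar ρ ((r : ℂ) • Ai + (s : ℂ) • Aj)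
      = c * (qvar ρ Ai + qvar ρ Aj) := by
  have hc := pair_id ρ Ai Aj (p : ℂ) (q : ℂ) (r : ℂ) (s : ℂ) (c : ℂ)
    (by exact_mod_cast congrArg (Complex.ofReal) h1)
    (by exact_mod_cast congrArg (Complex.ofReal) h2)
    (by exact_mod_cast congrArg (Complex.ofReal) h3)
  simp only [qvar]
  rw [← Complex.add_re, hc, Complex.re_ofReal_mul, Complex.add_re]

lemma filter_eq_Ioi {N : ℕ} (i : Fin N) :
    univ.filter (fun j => i < j) = Finset.Ioi i := by
  ext j; simp

lemma sum_pairs {N : ℕ} (f : Fin N → ℝ) :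
    ∑ i : Fin N, ∑ j ∈ univ.filter (fun j => i < j), (f i + f j)
      = ((N : ℝ) - 1) * ∑ i, f i := by
  have h1 : ∀ i : Fin N, ∑ j ∈ univ.filter (fun j => i < j), f i
      = ((N : ℝ) - 1 - (i : ℕ)) * f i := by
    intro i
    rw [Finset.sum_const, filter_eq_Ioi, Fin.card_Ioi, nsmul_eq_mul]
    congr 1
    have := i.isLt
    rw [Nat.cast_sub (by omega), Nat.cast_sub (by omega)]
    norm_num
  have h2 : ∑ i : Fin N, ∑ j ∈ univ.filter (fun j => i < j), f j
      = ∑ j : Fin N, ((j : ℕ) : ℝ) * f j := by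
    simp_rw [Finset.sum_filter]
    rw [Finset.sum_comm]
    refine Finset.sum_congr rfl fun j _ => ?_
    rw [← Finset.sum_filter, Finset.sum_const]
    have : univ.filter (fun x => x < j) = Finset.Iio j := by ext x; simp
    rw [this, Fin.card_Iio, nsmul_eq_mul]
  simp_rw [Finset.sum_add_distrib]
  rw [Finset.sum_congr rfl fun i _ => h1 i, h2, ← Finset.sum_add_distrib, Finset.mul_sum]
  refine Finset.sum_congr rfl fun i _ => ?_
  ring

lemma sigma_card {N : ℕ} (hN : 2 ≤ N) :
    (((univ : Finset (Fin N)).sigma (fun i => univ.filter (fun j => i < j))).card : ℝ)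
      = (N : ℝ) * ((N : ℝ) - 1) / 2 := by
  rw [Finset.card_sigma]
  have h1 : ∀ i : Fin N, (univ.filter (fun j => i < j)).card = N - 1 - (i : ℕ) := fun i => by
    rw [filter_eq_Ioi, Fin.card_Ioi]
  have hnat : (∑ i : Fin N, (univ.filter (fun j => i < j)).card) * 2 = N * (N - 1) := by
    simp_rw [h1]
    rw [Fin.sum_univ_eq_sum_range (fun i => N - 1 - i)]
    have hr := Finset.sum_range_reflect (fun i => i) N
    rw [hr]
    exact Finset.sum_range_id_mul_two N
  have := congrArg (Nat.cast : ℕ → ℝ) hnat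
  push_cast [Nat.cast_sub (by omega : 1 ≤ N)] at this
  push_cast
  linarith

lemma cs_bound {N : ℕ} (hN : 2 ≤ N) (f : Fin N → Fin N → ℝ) :
    (∑ i : Fin N, ∑ j ∈ univ.filter (fun j => i < j), f i j) ^ 2
      ≤ ((N : ℝ) * ((N : ℝ) - 1) / 2) *
        ∑ i : Fin N, ∑ j ∈ univ.filter (fun j => i < j), (f i j) ^ 2 := by
  rw [Finset.sum_sigma' (f := f), Finset.sum_sigma' (f := fun i j => (f i j) ^ 2)]
  calc (∑ x ∈ (univ : Finset (Fin N)).sigma (fun i => univ.filter (fun j => i < j)),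
          f x.1 x.2) ^ 2
      ≤ _ * ∑ x ∈ (univ : Finset (Fin N)).sigma (fun i => univ.filter (fun j => i < j)),
          (f x.1 x.2) ^ 2 := sq_sum_le_card_mul_sum_sq
    _ = _ := by rw [sigma_card hN]

lemma main_aux {d N : ℕ} (hN : 2 ≤ N) (ρ : Matrix (Fin d) (Fin d) ℂ)
    (hρ : ρ.PosSemidef) (hρ1 : ρ.trace = 1)
    (A : Fin N → Matrix (Fin d) (Fin d) ℂ) (hA : ∀ i, (A i).IsHermitian)
    (α : ℝ) (p q r s : ℝ)
    (h1 : p ^ 2 + r ^ 2 = 1 + α ^ 2) (h2 : q ^ 2 + s ^ 2 = 1 + α ^ 2)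
    (h3 : p * q + r * s = 0) :
    ∑ i, qvar ρ (A i) ≥
      (1 / ((1 + α ^ 2) * ((N : ℝ) - 1))) *
        ((2 / ((N : ℝ) * ((N : ℝ) - 1))) *
          (∑ i : Fin N, ∑ j ∈ univ.filter (fun j => i < j),
            qdev ρ ((p : ℂ) • A i + (q : ℂ) • A j)) ^ 2 +
         ∑ i : Fin N, ∑ j ∈ univ.filter (fun j => i < j),
            qvar ρ ((r : ℂ) • A i + (s : ℂ) • A j)) := by
  have hα2 : (0 : ℝ) < 1 + α ^ 2 := by positivity
  have hN1 : (0 : ℝ) < (N : ℝ) - 1 := by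
    have : (2 : ℝ) ≤ N := by exact_mod_cast hN
    linarith
  have hNpos : (0 : ℝ) < (N : ℝ) := by linarith
  have hNN : (0 : ℝ) < (N : ℝ) * ((N : ℝ) - 1) := by positivity
  set L := ∑ i, qvar ρ (A i) with hL
  set S := ∑ i : Fin N, ∑ j ∈ univ.filter (fun j => i < j),
      qdev ρ ((p : ℂ) • A i + (q : ℂ) • A j) with hS
  set P := ∑ i : Fin N, ∑ j ∈ univ.filter (fun j => i < j),
      qvar ρ ((p : ℂ) • A i + (q : ℂ) • A j) with hP
  set T := ∑ i : Fin N, ∑ j ∈ univ.filter (fun j => i < j),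
      qvar ρ ((r : ℂ) • A i + (s : ℂ) • A j) with hT
  -- parallelogram-type identity summed over pairs
  have hPT : P + T = (1 + α ^ 2) * (((N : ℝ) - 1) * L) := by
    rw [hP, hT, ← Finset.sum_add_distrib]
    have : ∀ i : Fin N, (∑ j ∈ univ.filter (fun j => i < j),
          qvar ρ ((p : ℂ) • A i + (q : ℂ) • A j))
        + (∑ j ∈ univ.filter (fun j => i < j),
          qvar ρ ((r : ℂ) • A i + (s : ℂ) • A j))
        = ∑ j ∈ univ.filter (fun j => i < j),
          (1 + α ^ 2) * (qvar ρ (A i) + qvar ρ (A j)) := by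
      intro i
      rw [← Finset.sum_add_distrib]
      exact Finset.sum_congr rfl fun j _ =>
        qvar_pair_id ρ (A i) (A j) p q r s (1 + α ^ 2) h1 h2 h3
    rw [Finset.sum_congr rfl fun i _ => this i]
    simp_rw [← Finset.mul_sum]
    rw [sum_pairs (fun i => qvar ρ (A i))]
  -- Cauchy-Schwarz
  have hCS : S ^ 2 ≤ ((N : ℝ) * ((N : ℝ) - 1) / 2) * P := by
    have := cs_bound hN (fun i j => qdev ρ ((p : ℂ) • A i + (q : ℂ) • A j))
    have hsq : ∀ i j : Fin N, (qdev ρ ((p : ℂ) • A i + (q : ℂ) • A j)) ^ 2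
        = qvar ρ ((p : ℂ) • A i + (q : ℂ) • A j) := fun i j =>
      Real.sq_sqrt (qvar_nonneg hρ hρ1 (herm_comb (hA i) (hA j) p q))
    simp_rw [hsq] at this
    exact this
  have hS2 : (2 / ((N : ℝ) * ((N : ℝ) - 1))) * S ^ 2 ≤ P := by
    rw [div_mul_eq_mul_div, div_le_iff₀ hNN]
    nlinarith [hCS]
  have hle : (1 / ((1 + α ^ 2) * ((N : ℝ) - 1))) *
      ((2 / ((N : ℝ) * ((N : ℝ) - 1))) * S ^ 2 + T)
      ≤ (1 / ((1 + α ^ 2) * ((N : ℝ) - 1))) * (P + T) := by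
    apply mul_le_mul_of_nonneg_left (by linarith) (by positivity)
  have heq : (1 / ((1 + α ^ 2) * ((N : ℝ) - 1))) * ((1 + α ^ 2) * (((N : ℝ) - 1) * L)) = L := by
    field_simp
  rw [hPT, heq] at hle
  exact hle

end Aux

theorem theorem1 {d N : ℕ} (hN : 2 ≤ N) (ρ : Matrix (Fin d) (Fin d) ℂ)
    (hρ : ρ.PosSemidef) (hρ1 : ρ.trace = 1)
    (A : Fin N → Matrix (Fin d) (Fin d) ℂ) (hA : ∀ i, (A i).IsHermitian)
    (α : ℝ) (hα : 0 ≤ α) (x y : ℕ) (hx : x ∈ ({0, 1} : Finset ℕ))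
    (hy : y ∈ ({0, 1} : Finset ℕ)) :
    ∑ i, qvar ρ (A i) ≥
      (1 / ((1 + α ^ 2) * ((N : ℝ) - 1))) *
        ((2 / ((N : ℝ) * ((N : ℝ) - 1))) *
          (∑ i : Fin N, ∑ j ∈ univ.filter (fun j => i < j),
            qdev ρ (((α : ℂ) ^ (1 - x)) • A i + ((-1 : ℂ) ^ y * (α : ℂ) ^ x) • A j)) ^ 2 +
         ∑ i : Fin N, ∑ j ∈ univ.filter (fun j => i < j),
            qvar ρ (((α : ℂ) ^ x) • A i + ((-1 : ℂ) ^ (1 - y) * (α : ℂ) ^ (1 - x)) • A j)) := by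
  fin_cases hx <;> fin_cases hy
  · -- x = 0, y = 0 : B = α Ai + Aj, C = Ai - α Aj
    have h := main_aux hN ρ hρ hρ1 A hA α α 1 1 (-α)
      (by ring) (by ring) (by ring)
    simpa [Complex.ofReal_neg, neg_smul] using h
  · -- x = 0, y = 1 : B = α Ai - Aj, C = Ai + α Aj
    have h := main_aux hN ρ hρ hρ1 A hA α α (-1) 1 α
      (by ring) (by ring) (by ring)
    simpa [Complex.ofReal_neg, neg_smul] using h
  · -- x = 1, y = 0 : B = Ai + α Aj, C = α Ai - Aj
    have h := main_aux hN ρ hρ hρ1 A hA α 1 α α (-1)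
      (by ring) (by ring) (by ring)
    simpa [Complex.ofReal_neg, neg_smul] using h
  · -- x = 1, y = 1 : B = Ai - α Aj, C = α Ai + Aj
    have h := main_aux hN ρ hρ hρ1 A hA α 1 (-α) α 1
      (by ring) (by ring) (by ring)
    simpa [Complex.ofReal_neg, neg_smul] using h
end

section
/- Let |ψ⟩ be a unit vector and A_1, ..., A_N Hermitian matrices, and suppose |ψ⟩ is not a common eigenvector of all A_i (i.e., there exists i such that A_i|ψ⟩ is not a scalar multiple of |ψ⟩). Then for any α > 0 the lower bound LB1 of Theorem 1 evaluated at the pure state ρ = |ψ⟩⟨ψ| is strictly positive; equivalently, ∑_{1≤i<j≤N} Δ²_ρ(A_i + α A_j) + ∑_{1≤i<j≤N} Δ²_ρ(αA_i − A_j) > 0. -/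
open Finset
open Matrix

lemma trace_rho_mul {d : ℕ} (ψ : Fin d → ℂ) (M : Matrix (Fin d) (Fin d) ℂ) :
    ((Matrix.of fun k l => ψ k * star (ψ l)) * M).trace = star ψ ⬝ᵥ M.mulVec ψ := by
  simp [Matrix.trace, Matrix.mul_apply, Matrix.diag, Matrix.mulVec, dotProduct,
    Finset.mul_sum]
  rw [Finset.sum_comm]
  apply Finset.sum_congr rfl; intros; apply Finset.sum_congr rfl; intros; ring

lemma herm_dot {d : ℕ} (ψ : Fin d → ℂ) (M : Matrix (Fin d) (Fin d) ℂ)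
    (hM : M.IsHermitian) (w : Fin d → ℂ) :
    star ψ ⬝ᵥ M.mulVec w = star (M.mulVec ψ) ⬝ᵥ w := by
  rw [Matrix.star_mulVec, hM.eq, Matrix.dotProduct_mulVec]

lemma qvar_pure {d : ℕ} (ψ : Fin d → ℂ) (hψ : star ψ ⬝ᵥ ψ = 1)
    (M : Matrix (Fin d) (Fin d) ℂ) (hM : M.IsHermitian) :
    qvar (Matrix.of fun k l => ψ k * star (ψ l)) M =
      ∑ i, Complex.normSq ((M.mulVec ψ - (star ψ ⬝ᵥ M.mulVec ψ) • ψ) i) := by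
  set φ := M.mulVec ψ with hφ
  set c := star ψ ⬝ᵥ φ with hc
  have h1 : star φ ⬝ᵥ ψ = c := by
    rw [hφ, ← herm_dot ψ M hM ψ, hc]
  have hcstar : star c = c := by
    conv_lhs => rw [hc, Matrix.star_dotProduct ψ φ, star_star]
    exact h1
  have h2 : ((Matrix.of fun k l => ψ k * star (ψ l)) * M ^ 2).trace = star φ ⬝ᵥ φ := by
    rw [trace_rho_mul, pow_two, ← Matrix.mulVec_mulVec, herm_dot ψ M hM]
  have key : star (φ - c • ψ) ⬝ᵥ (φ - c • ψ) = star φ ⬝ᵥ φ - c ^ 2 := by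
    rw [star_sub, star_smul, sub_dotProduct, dotProduct_sub,
      dotProduct_sub, smul_dotProduct, smul_dotProduct,
      dotProduct_smul, dotProduct_smul, hψ, h1, ← hc, hcstar]
    ring_nf
  have h3 : (star (φ - c • ψ) ⬝ᵥ (φ - c • ψ)) =
      ((∑ i, Complex.normSq ((φ - c • ψ) i) : ℝ) : ℂ) := by
    simp only [dotProduct, Pi.star_apply]
    push_cast
    apply Finset.sum_congr rfl
    intro i _
    rw [← Complex.mul_conj]
    ring_nf
    rfl
  unfold qvar
  rw [h2, trace_rho_mul, ← hφ, ← hc, ← key, h3]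
  simp

lemma qvar_nonneg_s19 {d : ℕ} (ψ : Fin d → ℂ) (hψ : star ψ ⬝ᵥ ψ = 1)
    (M : Matrix (Fin d) (Fin d) ℂ) (hM : M.IsHermitian) :
    0 ≤ qvar (Matrix.of fun k l => ψ k * star (ψ l)) M := by
  rw [qvar_pure ψ hψ M hM]
  exact Finset.sum_nonneg fun i _ => Complex.normSq_nonneg _

lemma qvar_zero_eigen {d : ℕ} (ψ : Fin d → ℂ) (hψ : star ψ ⬝ᵥ ψ = 1)
    (M : Matrix (Fin d) (Fin d) ℂ) (hM : M.IsHermitian)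
    (h : qvar (Matrix.of fun k l => ψ k * star (ψ l)) M ≤ 0) :
    ∃ c : ℂ, M.mulVec ψ = c • ψ := by
  rw [qvar_pure ψ hψ M hM] at h
  have h0 : ∑ i, Complex.normSq ((M.mulVec ψ - (star ψ ⬝ᵥ M.mulVec ψ) • ψ) i) = 0 :=
    le_antisymm h (Finset.sum_nonneg fun i _ => Complex.normSq_nonneg _)
  have hall := (Finset.sum_eq_zero_iff_of_nonneg
    (fun i _ => Complex.normSq_nonneg _)).mp h0
  refine ⟨star ψ ⬝ᵥ M.mulVec ψ, ?_⟩
  have hv : M.mulVec ψ - (star ψ ⬝ᵥ M.mulVec ψ) • ψ = 0 := by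
    funext i
    exact Complex.normSq_eq_zero.mp (hall i (Finset.mem_univ i))
  exact sub_eq_zero.mp hv

lemma eig_combo {d : ℕ} (ψ : Fin d → ℂ) (M1 M2 X : Matrix (Fin d) (Fin d) ℂ)
    (β γ δ : ℂ) (hδ : δ ≠ 0) (hcomb : β • M1 + γ • M2 = δ • X)
    (h1 : ∃ c : ℂ, M1.mulVec ψ = c • ψ) (h2 : ∃ c : ℂ, M2.mulVec ψ = c • ψ) :
    ∃ c : ℂ, X.mulVec ψ = c • ψ := by
  obtain ⟨c1, h1⟩ := h1
  obtain ⟨c2, h2⟩ := h2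
  refine ⟨δ⁻¹ * (β * c1 + γ * c2), ?_⟩
  have hv : δ • X.mulVec ψ = (β * c1 + γ * c2) • ψ := by
    rw [← Matrix.smul_mulVec, ← hcomb, Matrix.add_mulVec,
      Matrix.smul_mulVec, Matrix.smul_mulVec, h1, h2,
      smul_smul, smul_smul, add_smul]
  calc X.mulVec ψ = δ⁻¹ • (δ • X.mulVec ψ) := by
        rw [smul_smul, inv_mul_cancel₀ hδ, one_smul]
    _ = (δ⁻¹ * (β * c1 + γ * c2)) • ψ := by rw [hv, smul_smul]

theorem lower_bound_pos {d N : ℕ} (hN : 2 ≤ N)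
    (ψ : EuclideanSpace ℂ (Fin d)) (hψ : ‖ψ‖ = 1)
    (A : Fin N → Matrix (Fin d) (Fin d) ℂ) (hA : ∀ i, (A i).IsHermitian)
    (hcommon : ∃ i, ¬ ∃ c : ℂ, (A i).mulVec ψ = c • (ψ : Fin d → ℂ))
    (α : ℝ) (hα : 0 < α) :
    0 < (∑ i : Fin N, ∑ j ∈ univ.filter (fun j => i < j),
          qvar (Matrix.of fun k l => ψ k * star (ψ l)) (A i + (α : ℂ) • A j)) +
        ∑ i : Fin N, ∑ j ∈ univ.filter (fun j => i < j),
          qvar (Matrix.of fun k l => ψ k * star (ψ l)) ((α : ℂ) • A i - A j) := by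
  -- unit vector as plain vector
  have hψ' : star (ψ : Fin d → ℂ) ⬝ᵥ (ψ : Fin d → ℂ) = 1 := by
    have h := EuclideanSpace.inner_eq_star_dotProduct ψ ψ
    rw [inner_self_eq_norm_sq_to_K, hψ] at h
    rw [dotProduct_comm]
    simpa using h.symm
  -- hermiticity facts
  have hsmul : ∀ i, ((α : ℂ) • A i).IsHermitian := by
    intro i
    show ((α : ℂ) • A i)ᴴ = _
    rw [Matrix.conjTranspose_smul, (hA i).eq, Complex.star_def, Complex.conj_ofReal]
  have hH1 : ∀ i j, (A i + (α : ℂ) • A j).IsHermitian := fun i j => (hA i).add (hsmul j)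
  have hH2 : ∀ i j, ((α : ℂ) • A i - A j).IsHermitian := fun i j => (hsmul i).sub (hA j)
  have hnn1 : ∀ i j, 0 ≤ qvar (Matrix.of fun k l => ψ k * star (ψ l)) (A i + (α : ℂ) • A j) :=
    fun i j => qvar_nonneg_s19 _ hψ' _ (hH1 i j)
  have hnn2 : ∀ i j, 0 ≤ qvar (Matrix.of fun k l => ψ k * star (ψ l)) ((α : ℂ) • A i - A j) :=
    fun i j => qvar_nonneg_s19 _ hψ' _ (hH2 i j)
  obtain ⟨i₀, hi₀⟩ := hcommon
  have hδ : ((1 : ℂ) + (α : ℂ) ^ 2) ≠ 0 := by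
    intro h
    have : ((1 + α ^ 2 : ℝ) : ℂ) = 0 := by push_cast; linear_combination h
    have := Complex.ofReal_eq_zero.mp this
    nlinarith
  -- pick p < q with i₀ ∈ {p, q} and the relevant combination giving A i₀
  have key : ∃ p q : Fin N, p < q ∧
      0 < qvar (Matrix.of fun k l => ψ k * star (ψ l)) (A p + (α : ℂ) • A q) +
          qvar (Matrix.of fun k l => ψ k * star (ψ l)) ((α : ℂ) • A p - A q) := by
    have hNpos : 0 < N := by omega
    have hex : ∃ j₀ : Fin N, j₀ ≠ i₀ := by
      by_cases h0 : (i₀ : ℕ) = 0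
      · refine ⟨⟨1, by omega⟩, fun h => ?_⟩
        have h' := congrArg Fin.val h
        simp at h'
        omega
      · refine ⟨⟨0, by omega⟩, fun h => ?_⟩
        have h' := congrArg Fin.val h
        simp at h'
        omega
    obtain ⟨j₀, hne⟩ := hex
    rcases lt_or_gt_of_ne hne with hlt | hgt
    · -- j₀ < i₀ : pair (j₀, i₀)
      refine ⟨j₀, i₀, hlt, ?_⟩
      by_contra hcon
      push_neg at hcon
      have h1 : qvar (Matrix.of fun k l => ψ k * star (ψ l)) (A j₀ + (α : ℂ) • A i₀) ≤ 0 := by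
        have := hnn2 j₀ i₀; linarith
      have h2 : qvar (Matrix.of fun k l => ψ k * star (ψ l)) ((α : ℂ) • A j₀ - A i₀) ≤ 0 := by
        have := hnn1 j₀ i₀; linarith
      have e1 := qvar_zero_eigen _ hψ' _ (hH1 j₀ i₀) h1
      have e2 := qvar_zero_eigen _ hψ' _ (hH2 j₀ i₀) h2
      exact hi₀ (eig_combo _ _ _ _ ((α : ℂ)) (-1) ((1 : ℂ) + (α : ℂ) ^ 2) hδ
        (by module) e1 e2)
    · -- i₀ < j₀ : pair (i₀, j₀)
      refine ⟨i₀, j₀, hgt, ?_⟩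
      by_contra hcon
      push_neg at hcon
      have h1 : qvar (Matrix.of fun k l => ψ k * star (ψ l)) (A i₀ + (α : ℂ) • A j₀) ≤ 0 := by
        have := hnn2 i₀ j₀; linarith
      have h2 : qvar (Matrix.of fun k l => ψ k * star (ψ l)) ((α : ℂ) • A i₀ - A j₀) ≤ 0 := by
        have := hnn1 i₀ j₀; linarith
      have e1 := qvar_zero_eigen _ hψ' _ (hH1 i₀ j₀) h1
      have e2 := qvar_zero_eigen _ hψ' _ (hH2 i₀ j₀) h2
      exact hi₀ (eig_combo _ _ _ _ (1 : ℂ) ((α : ℂ)) ((1 : ℂ) + (α : ℂ) ^ 2) hδ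
        (by module) e1 e2)
  obtain ⟨p, q, hpq, hpos⟩ := key
  have hq : q ∈ univ.filter (fun j => p < j) := by simp [hpq]
  have hb1 : qvar (Matrix.of fun k l => ψ k * star (ψ l)) (A p + (α : ℂ) • A q) ≤
      ∑ i : Fin N, ∑ j ∈ univ.filter (fun j => i < j),
        qvar (Matrix.of fun k l => ψ k * star (ψ l)) (A i + (α : ℂ) • A j) := by
    calc _ ≤ ∑ j ∈ univ.filter (fun j => p < j),
          qvar (Matrix.of fun k l => ψ k * star (ψ l)) (A p + (α : ℂ) • A j) :=
        Finset.single_le_sum (fun j _ => hnn1 p j) hq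
      _ ≤ _ := Finset.single_le_sum
          (f := fun i => ∑ j ∈ univ.filter (fun j => i < j),
            qvar (Matrix.of fun k l => ψ k * star (ψ l)) (A i + (α : ℂ) • A j))
          (fun i _ => Finset.sum_nonneg fun j _ => hnn1 i j) (Finset.mem_univ p)
  have hb2 : qvar (Matrix.of fun k l => ψ k * star (ψ l)) ((α : ℂ) • A p - A q) ≤
      ∑ i : Fin N, ∑ j ∈ univ.filter (fun j => i < j),
        qvar (Matrix.of fun k l => ψ k * star (ψ l)) ((α : ℂ) • A i - A j) := by
    calc _ ≤ ∑ j ∈ univ.filter (fun j => p < j),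
          qvar (Matrix.of fun k l => ψ k * star (ψ l)) ((α : ℂ) • A p - A j) :=
        Finset.single_le_sum (fun j _ => hnn2 p j) hq
      _ ≤ _ := Finset.single_le_sum
          (f := fun i => ∑ j ∈ univ.filter (fun j => i < j),
            qvar (Matrix.of fun k l => ψ k * star (ψ l)) ((α : ℂ) • A i - A j))
          (fun i _ => Finset.sum_nonneg fun j _ => hnn2 i j) (Finset.mem_univ p)
  linarith
end
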